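/- Let Q : ℝ → ℝ be an even polynomial of degree 2n ≥ 4 such that Q(0) = 0, Q(r) > 0 for all r ≠ 0, and the coefficient of r² in Q equals 1, and let a ≥ 1 be an integer. Then there exists a constant C > 0, depending only on Q and a, such that for all c ∈ (0,1) and all k ∈ ℝ one has |Q^{(a)}(2πck)| (c + c|k|)^a ≤ C ( c² + Q(2πck) ), where Q^{(a)} denotes the a-th derivative of Q. -/

import Mathlib

open Real

open Polynomial Filter in
private lemma iter_deriv_comp_neg (p : Polynomial ℝ) (b : ℕ) :
    derivative^[b] (p.comp (-X)) = (-1) ^ b * (derivative^[b] p).comp (-X) := by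
  induction b generalizing p with
  | zero => simp
  | succ b ih =>
    rw [Function.iterate_succ_apply, Function.iterate_succ_apply]
    have hd : derivative (p.comp (-X)) = (-1 : Polynomial ℝ) * (derivative p).comp (-X) := by
      rw [derivative_comp]; simp [mul_comm]
    rw [hd, neg_one_mul, iterate_derivative_neg, ih (derivative p), pow_succ]
    ring

set_option maxHeartbeats 1600000 in
/-- the key factor bound from the proof of Proposition 2.1 of the
paper. If `Q : ℝ → ℝ` is an even polynomial of degree `2n ≥ 4` with `Q(0) = 0`,
`Q(r) > 0` for `r ≠ 0` and quadratic coefficient `1`, and `a ≥ 1` is an integer, then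
there is `C > 0`, depending only on `Q` and `a`, such that for all `c ∈ (0,1)` and
`k ∈ ℝ`, `|Q^{(a)}(2πck)| (c + c|k|)^a ≤ C (c² + Q(2πck))`. -/
theorem stmt19 (Q : Polynomial ℝ) (n : ℕ) (hn : 2 ≤ n) (hdeg : Q.natDegree = 2 * n)
    (heven : ∀ r : ℝ, Q.eval (-r) = Q.eval r)
    (hzero : Q.eval 0 = 0) (hpos : ∀ r : ℝ, r ≠ 0 → 0 < Q.eval r)
    (hcoeff : Q.coeff 2 = 1) (a : ℕ) (ha : 1 ≤ a) :
    ∃ C : ℝ, 0 < C ∧ ∀ c : ℝ, c ∈ Set.Ioo (0:ℝ) 1 → ∀ k : ℝ,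
      |(Polynomial.derivative^[a] Q).eval (2 * π * c * k)| * (c + c * |k|) ^ a
        ≤ C * (c ^ 2 + Q.eval (2 * π * c * k)) := by
  classical
  have hQnonneg : ∀ x : ℝ, 0 ≤ Q.eval x := by
    intro x
    rcases eq_or_ne x 0 with h | h
    · rw [h, hzero]
    · exact (hpos x h).le
  -- trivial case : too many derivatives
  by_cases htriv : Q.natDegree < a
  · refine ⟨1, one_pos, fun c hc k => ?_⟩
    rw [Polynomial.iterate_derivative_eq_zero htriv]
    simp only [Polynomial.eval_zero, abs_zero, zero_mul, one_mul]
    have := hQnonneg (2 * π * c * k)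
    nlinarith [hc.1, sq_nonneg c]
  push_neg at htriv
  set P : Polynomial ℝ := Polynomial.derivative^[a] Q with hP
  -- evenness as polynomial identity
  have hQcomp : Q.comp (-Polynomial.X) = Q := by
    apply Polynomial.funext
    intro r
    rw [Polynomial.eval_comp]
    simp [heven r]
  have hPcomp : P.comp (-Polynomial.X) = (-1) ^ a * P := by
    have h := iter_deriv_comp_neg Q a
    rw [hQcomp] at h
    have h2 := congrArg (fun p => ((-1 : Polynomial ℝ) ^ a) * p) h
    rw [← mul_assoc, ← pow_add] at h2
    have : (-1 : Polynomial ℝ) ^ (a + a) = 1 := by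
      rw [← two_mul]; exact (even_two_mul a).neg_one_pow
    rw [this, one_mul] at h2
    exact h2.symm
  have hPeven : ∀ x : ℝ, |P.eval (-x)| = |P.eval x| := by
    intro x
    have : P.eval (-x) = ((-1 : ℝ) ^ a) * P.eval x := by
      have := congrArg (Polynomial.eval x) hPcomp
      simpa [Polynomial.eval_comp] using this
    rw [this, abs_mul, abs_pow, abs_neg, abs_one, one_pow, one_mul]
  -- coefficient facts
  have hc0 : Q.coeff 0 = 0 := by rw [Polynomial.coeff_zero_eq_eval_zero]; exact hzero
  have hc1 : Q.coeff 1 = 0 := by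
    have hd := iter_deriv_comp_neg Q 1
    rw [hQcomp] at hd
    have := congrArg (Polynomial.eval 0) hd
    simp only [Function.iterate_one, Polynomial.eval_comp, Polynomial.eval_mul,
      Polynomial.eval_pow, Polynomial.eval_neg, Polynomial.eval_one, Polynomial.eval_X,
      neg_zero, pow_one] at this
    have h0 : (Polynomial.derivative Q).eval 0 = 0 := by linarith
    have h5 := Polynomial.coeff_derivative Q 0
    rw [Polynomial.coeff_zero_eq_eval_zero, h0] at h5
    norm_num at h5
    exact h5.symm
  -- factor out X^2
  obtain ⟨R, hR⟩ : Polynomial.X ^ 2 ∣ Q := by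
    rw [Polynomial.X_pow_dvd_iff]
    intro d hd
    interval_cases d
    · exact hc0
    · exact hc1
  have hQx : ∀ x : ℝ, Q.eval x = x ^ 2 * R.eval x := by
    intro x
    rw [hR]
    simp
  have hR0 : R.eval 0 = 1 := by
    have : Q.coeff (0 + 2) = R.coeff 0 := by rw [hR, Polynomial.coeff_X_pow_mul]
    rw [← Polynomial.coeff_zero_eq_eval_zero, ← this]
    exact hcoeff
  have hRpos : ∀ x : ℝ, 0 < R.eval x := by
    intro x
    rcases eq_or_ne x 0 with h | h
    · rw [h, hR0]; exact one_pos
    · have h1 := hpos x h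
      rw [hQx x] at h1
      have h2 : 0 < x ^ 2 := by positivity
      nlinarith
  -- lower bound for Q near 0
  obtain ⟨x₀, hx₀K, hx₀min⟩ :=
    (isCompact_Icc (a := (-1:ℝ)) (b := 1)).exists_isMinOn ⟨0, by norm_num⟩
      (R.continuous.continuousOn (s := Set.Icc (-1) 1))
  set δ : ℝ := R.eval x₀ with hδdef
  have hδ : 0 < δ := hRpos x₀
  have hQlow : ∀ x : ℝ, |x| ≤ 1 → δ * x ^ 2 ≤ Q.eval x := by
    intro x hx
    have hxK : x ∈ Set.Icc (-1:ℝ) 1 := by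
      constructor <;> [linarith [neg_abs_le x]; linarith [le_abs_self x]]
    have : δ ≤ R.eval x := hx₀min hxK
    rw [hQx x]
    nlinarith [sq_nonneg x]
  -- small-|x| bound
  have hsmall : ∃ B : ℝ, 0 < B ∧ ∀ x : ℝ, |x| ≤ 1 → ∀ c : ℝ, 0 < c → c < 1 →
      |P.eval x| * (c + |x|) ^ a ≤ B * (c ^ 2 + Q.eval x) := by
    have key : ∃ B₀ : ℝ, 0 < B₀ ∧ ∀ x : ℝ, |x| ≤ 1 → ∀ c : ℝ, 0 < c → c < 1 →
        |P.eval x| * (c + |x|) ^ a ≤ B₀ * (c ^ 2 + x ^ 2) := by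
      rcases eq_or_lt_of_le ha with ha1 | ha2
      · -- a = 1 : P vanishes at 0, factor out X
        obtain ⟨S, hS⟩ : Polynomial.X ∣ P := by
          rw [Polynomial.X_dvd_iff, Polynomial.coeff_zero_eq_eval_zero, hP, ← ha1]
          simp only [Function.iterate_one]
          have h5 := Polynomial.coeff_derivative Q 0
          rw [hc1] at h5
          norm_num at h5
          rw [← Polynomial.coeff_zero_eq_eval_zero, h5]
        obtain ⟨y₀, hy₀K, hy₀max⟩ :=
          (isCompact_Icc (a := (-1:ℝ)) (b := 1)).exists_isMaxOn ⟨0, by norm_num⟩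
            ((continuous_abs.comp S.continuous).continuousOn (s := Set.Icc (-1) 1))
        refine ⟨2 * |S.eval y₀| + 1, by positivity, fun x hx c hc hc1' => ?_⟩
        have hxK : x ∈ Set.Icc (-1:ℝ) 1 := by
          constructor <;> [linarith [neg_abs_le x]; linarith [le_abs_self x]]
        have hSb : |S.eval x| ≤ |S.eval y₀| := hy₀max hxK
        have hPx : |P.eval x| = |x| * |S.eval x| := by
          rw [hS]; simp [abs_mul]
        rw [hPx, ← ha1, pow_one]
        have h1 : 0 ≤ |x| := abs_nonneg x
        have h2 : 0 ≤ |S.eval x| := abs_nonneg _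
        nlinarith [sq_nonneg (|x| - c), sq_abs x, mul_nonneg h1 h2]
      · -- a ≥ 2
        obtain ⟨y₀, hy₀K, hy₀max⟩ :=
          (isCompact_Icc (a := (-1:ℝ)) (b := 1)).exists_isMaxOn ⟨0, by norm_num⟩
            ((continuous_abs.comp P.continuous).continuousOn (s := Set.Icc (-1) 1))
        refine ⟨2 ^ a * (|P.eval y₀| + 1), by positivity, fun x hx c hc hc1' => ?_⟩
        have hxK : x ∈ Set.Icc (-1:ℝ) 1 := by
          constructor <;> [linarith [neg_abs_le x]; linarith [le_abs_self x]]
        have hPb : |P.eval x| ≤ |P.eval y₀| := hy₀max hxK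
        have hcx : 0 ≤ c + |x| := by positivity
        have hcx2 : c + |x| ≤ 2 := by linarith [abs_nonneg x]
        have hsplit : (c + |x|) ^ a = (c + |x|) ^ (a - 2) * (c + |x|) ^ 2 := by
          rw [← pow_add, Nat.sub_add_cancel ha2]
        have hpow : (c + |x|) ^ (a - 2) ≤ 2 ^ (a - 2) :=
          pow_le_pow_left₀ hcx hcx2 _
        have h2a : (2:ℝ) ^ (a - 2) ≤ 2 ^ a :=
          pow_le_pow_right₀ (by norm_num) (Nat.sub_le a 2)
        have hsq : (c + |x|) ^ 2 ≤ 2 * (c ^ 2 + x ^ 2) := by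
          nlinarith [sq_nonneg (c - |x|), sq_abs x]
        calc |P.eval x| * (c + |x|) ^ a
            = |P.eval x| * ((c + |x|) ^ (a - 2) * (c + |x|) ^ 2) := by rw [hsplit]
          _ ≤ |P.eval y₀| * (2 ^ (a - 2) * (2 * (c ^ 2 + x ^ 2))) := by
              have hcx2nn : (0:ℝ) ≤ (c + |x|) ^ 2 := by positivity
              have hx2nn : (0:ℝ) ≤ 2 * (c ^ 2 + x ^ 2) := by positivity
              apply mul_le_mul hPb _ (by positivity) (abs_nonneg _)
              exact mul_le_mul hpow hsq hcx2nn (by positivity)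
          _ = (2 * 2 ^ (a - 2)) * (|P.eval y₀| * (c ^ 2 + x ^ 2)) := by ring
          _ ≤ 2 ^ a * ((|P.eval y₀| + 1) * (c ^ 2 + x ^ 2)) := by
              have h1 : (0:ℝ) ≤ c ^ 2 + x ^ 2 := by positivity
              have e1 : 2 * (2:ℝ) ^ (a - 2) ≤ 2 ^ a := by
                have hs2 : (2:ℝ) ^ a = 2 ^ (a - 2) * 2 ^ 2 := by
                  rw [← pow_add, Nat.sub_add_cancel ha2]
                nlinarith [pow_pos (by norm_num : (0:ℝ) < 2) (a - 2)]
              have e2 : |P.eval y₀| * (c ^ 2 + x ^ 2) ≤ (|P.eval y₀| + 1) * (c ^ 2 + x ^ 2) :=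
                mul_le_mul_of_nonneg_right (by linarith) h1
              exact mul_le_mul e1 e2 (mul_nonneg (abs_nonneg _) h1) (by positivity)
          _ = 2 ^ a * (|P.eval y₀| + 1) * (c ^ 2 + x ^ 2) := by ring
    obtain ⟨B₀, hB₀, hB₀le⟩ := key
    refine ⟨B₀ * (1 + δ⁻¹), by positivity, fun x hx c hc hc1' => ?_⟩
    calc |P.eval x| * (c + |x|) ^ a ≤ B₀ * (c ^ 2 + x ^ 2) := hB₀le x hx c hc hc1'
      _ ≤ B₀ * (1 + δ⁻¹) * (c ^ 2 + Q.eval x) := by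
          have h1 : x ^ 2 ≤ δ⁻¹ * Q.eval x := by
            have := hQlow x hx
            rw [le_inv_mul_iff₀ hδ]
            linarith
          have h2 := hQnonneg x
          have h3 : (0:ℝ) < δ⁻¹ := by positivity
          nlinarith [mul_le_mul_of_nonneg_left h1 hB₀.le, mul_nonneg hB₀.le h2,
            mul_nonneg (mul_nonneg hB₀.le h3.le) (sq_nonneg c),
            mul_nonneg (mul_nonneg hB₀.le h3.le) h2, sq_nonneg c]
  -- large-|x| bound
  have hbig : ∃ D : ℝ, 0 < D ∧ ∀ x : ℝ, 1 ≤ |x| →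
      |P.eval x| * |x| ^ a ≤ D * Q.eval x := by
    set T : Polynomial ℝ := P * Polynomial.X ^ a with hT
    have hQne : Q ≠ 0 := fun h => by simp [h] at hcoeff
    have hdegT : T.degree ≤ Q.degree := by
      have h1 : T.natDegree ≤ P.natDegree + a := by
        refine (Polynomial.natDegree_mul_le).trans ?_
        simp [Polynomial.natDegree_X_pow]
      have h2 : P.natDegree ≤ Q.natDegree - a := Polynomial.natDegree_iterate_derivative Q a
      have h3 : T.natDegree ≤ Q.natDegree := by
        have := Nat.sub_add_cancel htriv
        omega
      calc T.degree ≤ (T.natDegree : WithBot ℕ) := Polynomial.degree_le_natDegree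
        _ ≤ (Q.natDegree : WithBot ℕ) := by exact_mod_cast h3
        _ = Q.degree := (Polynomial.degree_eq_natDegree hQne).symm
    have hO := Polynomial.isBigO_of_degree_le T Q hdegT
    obtain ⟨c₀, hc₀pos, hc₀⟩ := hO.exists_pos
    obtain ⟨M, hM⟩ := Filter.eventually_atTop.mp hc₀.bound
    set M' : ℝ := max M 1 with hM'
    obtain ⟨z₀, hz₀K, hz₀oax⟩ :=
      (isCompact_Icc (a := (1:ℝ)) (b := M')).exists_isMaxOn ⟨1, by simp [hM', le_max_right]⟩
        ((continuous_abs.comp T.continuous).continuousOn (s := Set.Icc 1 M'))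
    obtain ⟨z₁, hz₁K, hz₁min⟩ :=
      (isCompact_Icc (a := (1:ℝ)) (b := M')).exists_isMinOn ⟨1, by simp [hM', le_max_right]⟩
        (Q.continuous.continuousOn (s := Set.Icc 1 M'))
    have hz₁pos : 0 < Q.eval z₁ := hpos z₁ (by intro h; rw [h] at hz₁K; exact absurd hz₁K.1 (by norm_num))
    set D : ℝ := max c₀ (|T.eval z₀| / Q.eval z₁) + 1 with hD
    have hDpos : 0 < D := by
      have h0 : 0 ≤ max c₀ (|T.eval z₀| / Q.eval z₁) := le_max_of_le_left hc₀pos.le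
      rw [hD]
      linarith
    refine ⟨D, hDpos, ?_⟩
    have hposcase : ∀ x : ℝ, 1 ≤ x → |P.eval x| * |x| ^ a ≤ D * Q.eval x := by
      intro x hx
      have hQxpos : 0 < Q.eval x := hpos x (by linarith)
      have hTx : |T.eval x| = |P.eval x| * |x| ^ a := by
        rw [hT]; simp [abs_mul, abs_pow]
      rw [← hTx]
      rcases le_or_gt x M' with hxM | hxM
      · have hxK : x ∈ Set.Icc (1:ℝ) M' := ⟨hx, hxM⟩
        have h1 : |T.eval x| ≤ |T.eval z₀| := hz₀oax hxK
        have h2 : Q.eval z₁ ≤ Q.eval x := hz₁min hxK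
        have h3 : |T.eval z₀| ≤ (|T.eval z₀| / Q.eval z₁) * Q.eval x := by
          rw [div_mul_eq_mul_div, le_div_iff₀ hz₁pos]
          exact mul_le_mul_of_nonneg_left h2 (abs_nonneg _)
        have h4 : (|T.eval z₀| / Q.eval z₁) ≤ D := by
          rw [hD]; linarith [le_max_right c₀ (|T.eval z₀| / Q.eval z₁)]
        calc |T.eval x| ≤ (|T.eval z₀| / Q.eval z₁) * Q.eval x := le_trans h1 h3
          _ ≤ D * Q.eval x := mul_le_mul_of_nonneg_right h4 hQxpos.le
      · have hxge : M ≤ x := le_trans (le_max_left M 1) hxM.le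
        have h1 : ‖T.eval x‖ ≤ c₀ * ‖Q.eval x‖ := hM x hxge
        rw [Real.norm_eq_abs, Real.norm_eq_abs, abs_of_pos hQxpos] at h1
        have h4 : c₀ ≤ D := by rw [hD]; linarith [le_max_left c₀ (|T.eval z₀| / Q.eval z₁)]
        calc |T.eval x| ≤ c₀ * Q.eval x := h1
          _ ≤ D * Q.eval x := mul_le_mul_of_nonneg_right h4 hQxpos.le
    intro x hx
    rcases le_abs.mp hx with h | h
    · exact hposcase x h
    · have h1 := hposcase (-x) h
      rw [hPeven x, abs_neg] at h1
      calc |P.eval x| * |x| ^ a ≤ D * Q.eval (-x) := by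
            rw [← hPeven x]; simpa [hPeven] using h1
        _ = D * Q.eval x := by rw [heven x]
  obtain ⟨B, hB, hBle⟩ := hsmall
  obtain ⟨D, hD, hDle⟩ := hbig
  refine ⟨B + 2 ^ a * D, by positivity, fun c hc k => ?_⟩
  obtain ⟨hc0', hc1'⟩ := hc
  set x : ℝ := 2 * π * c * k with hx
  have hck : c + c * |k| ≤ c + |x| := by
    have hπ : (1:ℝ) ≤ 2 * π := by nlinarith [pi_gt_three]
    have h1 : |x| = (2 * π) * (c * |k|) := by
      rw [hx, abs_mul, abs_mul, abs_mul]
      rw [abs_of_pos hc0', abs_of_pos pi_pos, abs_two]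
      ring
    nlinarith [abs_nonneg k, mul_nonneg hc0'.le (abs_nonneg k)]
  have hcknn : 0 ≤ c + c * |k| := by positivity
  have hsum_nn : 0 ≤ c ^ 2 + Q.eval x := by
    have := hQnonneg x
    positivity
  rcases le_or_gt |x| 1 with hx1 | hx1
  · have h1 : (c + c * |k|) ^ a ≤ (c + |x|) ^ a := pow_le_pow_left₀ hcknn hck a
    have h2 : |P.eval x| * (c + c * |k|) ^ a ≤ |P.eval x| * (c + |x|) ^ a :=
      mul_le_mul_of_nonneg_left h1 (abs_nonneg _)
    have h3 := hBle x hx1 c hc0' hc1'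
    have h4 : B * (c ^ 2 + Q.eval x) ≤ (B + 2 ^ a * D) * (c ^ 2 + Q.eval x) := by
      have h5 : (0:ℝ) < 2 ^ a * D := by positivity
      nlinarith
    calc |P.eval x| * (c + c * |k|) ^ a ≤ |P.eval x| * (c + |x|) ^ a := h2
      _ ≤ B * (c ^ 2 + Q.eval x) := h3
      _ ≤ (B + 2 ^ a * D) * (c ^ 2 + Q.eval x) := h4
  · have hle2x : c + c * |k| ≤ 2 * |x| := by
      have : c + |x| ≤ 2 * |x| := by linarith
      linarith
    have h1 : (c + c * |k|) ^ a ≤ (2 * |x|) ^ a := pow_le_pow_left₀ hcknn hle2x a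
    have h2 : (2 * |x|) ^ a = 2 ^ a * |x| ^ a := mul_pow 2 |x| a
    have h3 := hDle x hx1.le
    have h4 : |P.eval x| * (c + c * |k|) ^ a ≤ 2 ^ a * (|P.eval x| * |x| ^ a) := by
      calc |P.eval x| * (c + c * |k|) ^ a ≤ |P.eval x| * (2 ^ a * |x| ^ a) := by
            rw [← h2]; exact mul_le_mul_of_nonneg_left h1 (abs_nonneg _)
        _ = 2 ^ a * (|P.eval x| * |x| ^ a) := by ring
    have h5 : 2 ^ a * (|P.eval x| * |x| ^ a) ≤ 2 ^ a * (D * Q.eval x) :=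
      mul_le_mul_of_nonneg_left h3 (by positivity)
    have h6 : 2 ^ a * (D * Q.eval x) ≤ (B + 2 ^ a * D) * (c ^ 2 + Q.eval x) := by
      have h7 : (0:ℝ) < 2 ^ a := by positivity
      have h8 := hQnonneg x
      nlinarith [mul_nonneg hB.le (sq_nonneg c), mul_nonneg hB.le h8,
        mul_nonneg (mul_nonneg h7.le hD.le) (sq_nonneg c)]
    linarith
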